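/- Assume G is a directed po-group and n ≥ 1. Then: (a) the map s₀ : E → ℝ sending each z ∈ E_k to k/n (k = 0, 1, …, n) is a state on E; (b) every state on E equals s₀; in particular E = [0̄, u_n] possesses exactly one state. -/

import Mathlib

open Function

variable {I G : Type*}

def kmul [Mul G] (φ : Equiv.Perm I) (p q : ℤ × (I → G)) : ℤ × (I → G) :=
  (p.1 + q.1, fun i => p.2 i * q.2 ((φ ^ p.1) i))

def kone [One G] : ℤ × (I → G) := (0, fun _ => 1)

def kunit [One G] (n : ℤ) : ℤ × (I → G) := (n, fun _ => 1)

def kle [LE G] (p q : ℤ × (I → G)) : Prop :=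
  p.1 < q.1 ∨ (p.1 = q.1 ∧ ∀ i, p.2 i ≤ q.2 i)

def kE [One G] [LE G] (n : ℤ) : Set (ℤ × (I → G)) :=
  {z | kle kone z ∧ kle z (kunit n)}

/-- A state on `E = [0̄, u_n]`: a `[0,1]`-valued function with `s(u_n) = 1` which is
additive on products of elements of `E` staying below `u_n`. -/
def kIsState [Group G] [PartialOrder G] (φ : Equiv.Perm I) (n : ℤ)
    (s : (ℤ × (I → G)) → ℝ) : Prop :=
  (∀ z ∈ kE n, s z ∈ Set.Icc (0 : ℝ) 1) ∧
  s (kunit n) = 1 ∧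
  (∀ a ∈ kE n, ∀ b ∈ kE n, kle (kmul φ a b) (kunit n) →
    s (kmul φ a b) = s a + s b)

section Aux

variable [Group G] [PartialOrder G]
    [CovariantClass G G (· * ·) (· ≤ ·)] [CovariantClass G G (swap (· * ·)) (· ≤ ·)]

lemma aux_one_mem (n : ℤ) (hn : 1 ≤ n) (k : ℤ) (h0 : 0 ≤ k) (h1 : k ≤ n) :
    ((k, fun _ => (1 : G)) : ℤ × (I → G)) ∈ kE n := by
  constructor
  · rcases h0.lt_or_eq with h | h
    · exact Or.inl h
    · exact Or.inr ⟨h, fun i => le_rfl⟩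
  · rcases h1.lt_or_eq with h | h
    · exact Or.inl h
    · exact Or.inr ⟨h, fun i => le_rfl⟩

lemma aux_kone_mem (n : ℤ) (hn : 1 ≤ n) : (kone : ℤ × (I → G)) ∈ kE n :=
  aux_one_mem n hn 0 le_rfl (by omega)

lemma aux_s_kone (φ : Equiv.Perm I) (n : ℤ) (hn : 1 ≤ n)
    (s : (ℤ × (I → G)) → ℝ) (hs : kIsState φ n s) : s kone = 0 := by
  have hmem := aux_kone_mem (I := I) (G := G) n hn
  have h := hs.2.2 kone hmem kone hmem
  have he : kmul φ (kone : ℤ × (I → G)) kone = kone := by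
    simp [kmul, kone]
  rw [he] at h
  have := h hmem.2
  linarith

lemma aux_s_zero (φ : Equiv.Perm I) (n : ℤ) (hn : 1 ≤ n)
    (s : (ℤ × (I → G)) → ℝ) (hs : kIsState φ n s)
    (x : I → G) (hx : ∀ i, 1 ≤ x i) : s (0, x) = 0 := by
  have hpmem : ∀ m : ℕ, ((0 : ℤ), fun i => x i ^ m) ∈ kE (I := I) (G := G) n := by
    intro m
    exact ⟨Or.inr ⟨rfl, fun i => one_le_pow_of_one_le' (hx i) m⟩, Or.inl (show (0:ℤ) < n by omega)⟩
  have key : ∀ m : ℕ, s (0, fun i => x i ^ m) = m * s (0, x) := by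
    intro m
    induction m with
    | zero =>
      have : ((0 : ℤ), fun i => x i ^ 0) = (kone : ℤ × (I → G)) := by
        simp [kone]
      rw [this, aux_s_kone φ n hn s hs]
      simp
    | succ m ih =>
      have h := hs.2.2 (0, fun i => x i ^ m) (hpmem m) (0, x)
        ⟨Or.inr ⟨rfl, hx⟩, Or.inl (show (0:ℤ) < n by omega)⟩ (Or.inl (show ((0:ℤ)+0) < n by omega))
      have he : kmul φ ((0 : ℤ), fun i => x i ^ m) (0, x)
          = ((0 : ℤ), fun i => x i ^ (m + 1)) := by
        unfold kmul
        refine Prod.ext (by simp) ?_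
        funext i
        simp [pow_succ]
      rw [he] at h
      rw [h, ih]
      push_cast
      ring
  have hub : ∀ m : ℕ, (m : ℝ) * s (0, x) ≤ 1 := by
    intro m
    have := (hs.1 _ (hpmem m)).2
    rw [key m] at this
    exact this
  have hnn : 0 ≤ s (0, x) := by
    have := (hs.1 (0, x) ⟨Or.inr ⟨rfl, hx⟩, Or.inl (show (0:ℤ) < n by omega)⟩).1
    exact this
  by_contra hne
  have hpos : 0 < s (0, x) := lt_of_le_of_ne hnn (Ne.symm hne)
  obtain ⟨m, hm⟩ := exists_nat_gt (1 / s (0, x))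
  have : 1 < (m : ℝ) * s (0, x) := (div_lt_iff₀ hpos).mp hm
  exact absurd (hub m) (not_le.mpr this)

/-- If `(k,x) ∈ E`, `x ≤ c` pointwise, and `(k,c) ≤ u_n`, then `s (k,c) = s (k,x)`. -/
lemma aux_shift (φ : Equiv.Perm I) (n : ℤ) (hn : 1 ≤ n)
    (s : (ℤ × (I → G)) → ℝ) (hs : kIsState φ n s)
    (k : ℤ) (x c : I → G) (hmem : ((k, x) : ℤ × (I → G)) ∈ kE n)
    (hxc : ∀ i, x i ≤ c i) (hcle : kle ((k, c) : ℤ × (I → G)) (kunit n)) :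
    s (k, c) = s (k, x) := by
  set y : I → G := fun j => (x ((φ ^ (-k)) j))⁻¹ * c ((φ ^ (-k)) j) with hy
  have hy1 : ∀ j, 1 ≤ y j := fun j => le_inv_mul_iff_le.mpr (hxc ((φ ^ (-k)) j))
  have hymem : ((0 : ℤ), y) ∈ kE (I := I) (G := G) n :=
    ⟨Or.inr ⟨rfl, hy1⟩, Or.inl (show (0:ℤ) < n by omega)⟩
  have he : kmul φ ((k, x) : ℤ × (I → G)) (0, y) = (k, c) := by
    unfold kmul
    refine Prod.ext (by simp) ?_
    funext i
    have hinv : (φ ^ (-k)) ((φ ^ k) i) = i := by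
      rw [zpow_neg]
      exact (φ ^ k).symm_apply_apply i
    simp only [hy, hinv]
    exact mul_inv_cancel_left _ _
  have h := hs.2.2 (k, x) hmem (0, y) hymem (by rw [he]; exact hcle)
  rw [he] at h
  rw [h, aux_s_zero φ n hn s hs y hy1, add_zero]

lemma aux_s_nat (φ : Equiv.Perm I) (n : ℤ) (hn : 1 ≤ n)
    (s : (ℤ × (I → G)) → ℝ) (hs : kIsState φ n s) :
    ∀ m : ℕ, (m : ℤ) ≤ n →
      s (((m : ℤ), fun _ => (1 : G)) : ℤ × (I → G)) = m * s (((1 : ℤ), fun _ => (1 : G)) : ℤ × (I → G)) := by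
  intro m
  induction m with
  | zero =>
    intro _
    have : ((((0 : ℕ) : ℤ), fun _ => (1 : G)) : ℤ × (I → G)) = (kone : ℤ × (I → G)) := by
      simp [kone]
    rw [this, aux_s_kone φ n hn s hs]
    simp
  | succ m ih =>
    intro hm
    have hm' : (m : ℤ) ≤ n := by push_cast at hm ⊢; omega
    have ha := aux_one_mem (I := I) (G := G) n hn (m : ℤ) (by positivity) hm'
    have hb := aux_one_mem (I := I) (G := G) n hn 1 (by omega) hn
    have he : kmul φ (((m : ℤ), fun _ => (1 : G)) : ℤ × (I → G)) ((1 : ℤ), fun _ => (1 : G))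
        = ((((m : ℤ) + 1), fun _ => (1 : G)) : ℤ × (I → G)) := by
      unfold kmul
      exact Prod.ext rfl (by funext i; simp)
    have hle : kle ((((m : ℤ) + 1), fun _ => (1 : G)) : ℤ × (I → G)) (kunit n) := by
      have h1 : ((m : ℤ) + 1) ≤ n := by push_cast at hm; omega
      rcases h1.lt_or_eq with h | h
      · exact Or.inl h
      · exact Or.inr ⟨h, fun i => le_rfl⟩
    have h := hs.2.2 _ ha _ hb (by rw [he]; exact hle)
    rw [he] at h
    have : (((((m : ℕ) + 1 : ℕ) : ℤ), fun _ => (1 : G)) : ℤ × (I → G))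
        = (((((m : ℤ) + 1)), fun _ => (1 : G)) : ℤ × (I → G)) := by push_cast; rfl
    rw [this, h, ih hm']
    push_cast
    ring

end Aux

/-- (a) the map sending each `z ∈ E_k` to `k/n` is a state on `E`;
(b) every state on `E` equals it, so `E` possesses exactly one state. -/
theorem stmt10 [Group G] [PartialOrder G]
    [CovariantClass G G (· * ·) (· ≤ ·)] [CovariantClass G G (swap (· * ·)) (· ≤ ·)]
    (hdir : ∀ a b : G, ∃ c, a ≤ c ∧ b ≤ c)
    (φ : Equiv.Perm I) (n : ℤ) (hn : 1 ≤ n) :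
    kIsState φ n (fun z : ℤ × (I → G) => (z.1 : ℝ) / (n : ℝ)) ∧
    ∀ s : (ℤ × (I → G)) → ℝ, kIsState φ n s →
      ∀ z ∈ kE (I := I) (G := G) n, s z = (z.1 : ℝ) / (n : ℝ) := by
  have hnR : (0 : ℝ) < (n : ℝ) := by exact_mod_cast (by omega : (0:ℤ) < n)
  constructor
  · refine ⟨?_, ?_, ?_⟩
    · intro z hz
      have h0 : 0 ≤ z.1 := by
        rcases hz.1 with h | h
        · exact le_of_lt h
        · exact le_of_eq h.1
      have h1 : z.1 ≤ n := by
        rcases hz.2 with h | h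
        · exact le_of_lt h
        · exact le_of_eq h.1
      constructor
      · positivity
      · rw [div_le_one hnR]
        exact_mod_cast h1
    · simp only [kunit]
      exact div_self (ne_of_gt hnR)
    · intro a _ b _ _
      show ((a.1 + b.1 : ℤ) : ℝ) / n = _
      push_cast
      ring
  · intro s hs z hz
    obtain ⟨k, x⟩ := z
    have hk0 : 0 ≤ k := by
      rcases hz.1 with h | h
      · exact le_of_lt h
      · exact le_of_eq h.1
    have hkn : k ≤ n := by
      rcases hz.2 with h | h
      · exact le_of_lt h
      · exact le_of_eq h.1
    -- find a common upper bound `c` of `x` and `1` with `(k,c) ≤ u_n`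
    obtain ⟨c, hxc, h1c, hcle⟩ :
        ∃ c : I → G, (∀ i, x i ≤ c i) ∧ (∀ i, 1 ≤ c i) ∧
          kle ((k, c) : ℤ × (I → G)) (kunit n) := by
      rcases hkn.lt_or_eq with h | h
      · choose c hc1 hc2 using fun i => hdir (x i) 1
        exact ⟨c, hc1, hc2, Or.inl h⟩
      · refine ⟨fun _ => 1, ?_, fun i => le_rfl, Or.inr ⟨h, fun i => le_rfl⟩⟩
        rcases hz.2 with h' | h'
        · exact absurd h' (by simp [kunit, h])
        · exact h'.2
    have h1 : s (k, x) = s ((k, fun _ => (1:G)) : ℤ × (I → G)) := by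
      rw [← aux_shift φ n hn s hs k x c hz hxc hcle,
        aux_shift φ n hn s hs k (fun _ => 1) c (aux_one_mem n hn k hk0 hkn) h1c hcle]
    -- value at `(k, 1)`
    have hknat : ((k.toNat : ℤ)) = k := Int.toNat_of_nonneg hk0
    have hk1 : s ((k, fun _ => (1:G)) : ℤ × (I → G)) = k.toNat * s ((1:ℤ), fun _ => 1) := by
      rw [← hknat]
      exact aux_s_nat φ n hn s hs k.toNat (by omega)
    have hnnat : ((n.toNat : ℤ)) = n := Int.toNat_of_nonneg (by omega)
    have hn1 : (n : ℝ) * s (((1:ℤ), fun _ => (1:G)) : ℤ × (I → G)) = 1 := by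
      have h2 := aux_s_nat φ n hn s hs n.toNat (by omega)
      rw [hnnat] at h2
      have hu : (((n : ℤ), fun _ => (1:G)) : ℤ × (I → G)) = kunit n := rfl
      rw [hu, hs.2.1] at h2
      have h3 : ((n.toNat : ℝ)) = (n : ℝ) := by exact_mod_cast hnnat
      rw [h3] at h2
      linarith
    have hkR : ((k.toNat : ℝ)) = (k : ℝ) := by exact_mod_cast hknat
    have hs1 : s (((1:ℤ), fun _ => (1:G)) : ℤ × (I → G)) = 1 / (n : ℝ) := by
      rw [eq_div_iff (ne_of_gt hnR)]
      linarith [mul_comm ((n : ℝ)) (s (((1:ℤ), fun _ => (1:G)) : ℤ × (I → G)))]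
    rw [h1, hk1, hkR, hs1]
    ring
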